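/- Parametrized embedding lemma, product form: for each n ∈ ℕ let Cₙ and Dₙ be compact Hausdorff topological spaces, Aₙ any topological space, and πⁿ : ([0,∞) × (0,∞)) × Cₙ → Dₙ a continuous map such that for each (p, q) ∈ [0,∞) × (0,∞) the slice πⁿ_{p,q} : Cₙ → Dₙ is surjective. Then the map Φ : [0,∞) × (0,∞) × ∏ₙ C(Dₙ, Aₙ) → [0,∞) × (0,∞) × ∏ₙ C(Cₙ, Aₙ) defined by Φ(p, q, (fₙ)ₙ) = (p, q, (fₙ ∘ πⁿ_{p,q})ₙ) is a topological embedding: it is injective and a homeomorphism onto its image. -/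

import Mathlib

open Topology

/-- Key pointwise lemma: given a parametrized family of surjections `π_p : C → D` between
compact spaces, a compact `K ⊆ D`, an open `U`, a parameter `p₀` and `f₀ : C(D, A)` with
`f₀ '' K ⊆ U`, we can find a neighborhood `N` of `p₀` and a compact `L ⊆ C` such that
`f₀ ∘ π_{p₀}` maps `L` into `U`, while for every `p ∈ N` the slice `π_p` maps `L` onto `K`. -/
lemma parametrized_precomp_key {Pa Cc Dd Aa : Type*} [TopologicalSpace Pa] [TopologicalSpace Cc]
    [TopologicalSpace Dd] [TopologicalSpace Aa] [CompactSpace Cc] [CompactSpace Dd] [T2Space Dd]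
    [LocallyCompactSpace Pa] [T2Space Pa]
    (π : Pa × Cc → Dd) (hπ : Continuous π)
    (hsurj : ∀ p : Pa, Function.Surjective fun x : Cc => π (p, x))
    {K : Set Dd} (hK : IsCompact K) {U : Set Aa} (hU : IsOpen U)
    (p₀ : Pa) (f₀ : C(Dd, Aa)) (hf₀ : Set.MapsTo f₀ K U) :
    ∃ (N : Set Pa) (L : Set Cc), N ∈ 𝓝 p₀ ∧ IsCompact L ∧
      (∀ x ∈ L, f₀ (π (p₀, x)) ∈ U) ∧
      (∀ p ∈ N, ∀ d ∈ K, ∃ x ∈ L, π (p, x) = d) := by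
  classical
  set U' : Set Dd := f₀ ⁻¹' U with hU'
  have hU'open : IsOpen U' := hU.preimage f₀.continuous
  have hKU' : K ⊆ U' := hf₀
  -- the "bad" set
  set S : Set (Pa × Cc) := {y | π y ∈ K ∧ π (p₀, y.2) ∉ U'} with hS
  have hSclosed : IsClosed S := by
    have h1 : IsClosed {y : Pa × Cc | π y ∈ K} := hK.isClosed.preimage hπ
    have h2 : IsClosed {y : Pa × Cc | π (p₀, y.2) ∉ U'} :=
      (hU'open.preimage (hπ.comp (continuous_const.prodMk continuous_snd))).isClosed_compl
    exact h1.inter h2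
  obtain ⟨N₀, hN₀c, hN₀nhds⟩ := exists_compact_mem_nhds p₀
  have hS₀c : IsCompact (S ∩ N₀ ×ˢ (Set.univ : Set Cc)) :=
    (hN₀c.prod isCompact_univ).inter_left hSclosed
  set E : Set Pa := Prod.fst '' (S ∩ N₀ ×ˢ (Set.univ : Set Cc)) with hE
  have hEc : IsCompact E := hS₀c.image continuous_fst
  have hp₀E : p₀ ∉ E := by
    rintro ⟨⟨p, x⟩, ⟨⟨hxK, hxU⟩, -⟩, rfl⟩
    exact hxU (hKU' hxK)
  have hEcompl : Eᶜ ∈ 𝓝 p₀ := hEc.isClosed.isOpen_compl.mem_nhds hp₀E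
  obtain ⟨N, hNnhds, hNsub, hNc⟩ :=
    local_compact_nhds (Filter.inter_mem (interior_mem_nhds.2 hN₀nhds) hEcompl)
  set L : Set Cc := Prod.snd '' (π ⁻¹' K ∩ N ×ˢ (Set.univ : Set Cc)) with hL
  have hLc : IsCompact L :=
    (((hNc.prod isCompact_univ).inter_left (hK.isClosed.preimage hπ)).image continuous_snd)
  refine ⟨N, L, hNnhds, hLc, ?_, ?_⟩
  · rintro x ⟨⟨p, x'⟩, ⟨hpK, hpN, -⟩, rfl⟩
    by_contra hxn
    have hpE : p ∈ E :=
      ⟨(p, x'), ⟨⟨hpK, hxn⟩, interior_subset (hNsub hpN).1, trivial⟩, rfl⟩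
    exact (hNsub hpN).2 hpE
  · intro p hp d hd
    obtain ⟨x, hx⟩ := hsurj p d
    exact ⟨x, ⟨(p, x), ⟨by simpa [hx] using hd, hp, trivial⟩, rfl⟩, hx⟩

/-- Auxiliary version of the main theorem, with an abstract (locally compact Hausdorff)
parameter space and the parameter collected as the first factor of a plain product. -/
lemma parametrized_precomp_pi_isEmbedding_aux {Pa : Type*} {C D A : ℕ → Type*}
    [TopologicalSpace Pa] [LocallyCompactSpace Pa] [T2Space Pa]
    [∀ n, TopologicalSpace (C n)] [∀ n, TopologicalSpace (D n)] [∀ n, TopologicalSpace (A n)]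
    [∀ n, CompactSpace (C n)] [∀ n, CompactSpace (D n)] [∀ n, T2Space (D n)]
    (σ : ∀ n, Pa → C(C n, D n))
    (hσ : ∀ n, Continuous fun y : Pa × C n => σ n y.1 y.2)
    (hsurj : ∀ n (p : Pa), Function.Surjective (σ n p)) :
    IsEmbedding (fun z : Pa × (∀ n, C(D n, A n)) =>
      ((z.1, fun n => (z.2 n).comp (σ n z.1)) : Pa × (∀ n, C(C n, A n)))) := by
  classical
  have hcont : Continuous (fun z : Pa × (∀ n, C(D n, A n)) =>
      ((z.1, fun n => (z.2 n).comp (σ n z.1)) : Pa × (∀ n, C(C n, A n)))) := by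
    refine continuous_fst.prodMk (continuous_pi fun n => ?_)
    have hslice : Continuous (fun z : Pa × (∀ n, C(D n, A n)) => σ n z.1) := by
      apply ContinuousMap.continuous_of_continuous_uncurry
      exact (hσ n).comp ((continuous_fst.comp continuous_fst).prodMk continuous_snd)
    exact ContinuousMap.continuous_comp'.comp
      (hslice.prodMk ((continuous_apply n).comp continuous_snd))
  constructor
  · -- IsInducing
    refine ⟨le_antisymm (continuous_iff_le_induced.1 hcont) ?_⟩
    set t : TopologicalSpace (Pa × (∀ n, C(D n, A n))) := TopologicalSpace.induced
      (fun z : Pa × (∀ n, C(D n, A n)) =>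
        ((z.1, fun n => (z.2 n).comp (σ n z.1)) : Pa × (∀ n, C(C n, A n))))
      inferInstance with ht
    have hΦ' : Continuous[t, _]
        (fun z : Pa × (∀ n, C(D n, A n)) =>
          ((z.1, fun n => (z.2 n).comp (σ n z.1)) : Pa × (∀ n, C(C n, A n)))) := by
      rw [ht]; exact continuous_induced_dom
    have h1 : Continuous[t, _] (fun z : Pa × (∀ n, C(D n, A n)) => z.1) :=
      (continuous_fst.comp hΦ' :
        Continuous[t, _] (Prod.fst ∘ fun z : Pa × (∀ n, C(D n, A n)) =>
          ((z.1, fun n => (z.2 n).comp (σ n z.1)) : Pa × (∀ n, C(C n, A n)))))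
    have h3 : ∀ n, Continuous[t, ContinuousMap.compactOpen]
        fun z : Pa × (∀ n, C(D n, A n)) => z.2 n := by
      intro n
      refine ContinuousMap.continuous_compactOpen.2 fun K hK U hU => ?_
      set s : Set (Pa × (∀ n, C(D n, A n))) := {z | Set.MapsTo (z.2 n) K U} with hs
      have perpoint : ∀ z ∈ s, ∃ T : Set (Pa × (∀ n, C(C n, A n))), IsOpen T ∧
          ((z.1, fun m => (z.2 m).comp (σ m z.1)) : Pa × (∀ n, C(C n, A n))) ∈ T ∧
          (fun z' : Pa × (∀ n, C(D n, A n)) =>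
            ((z'.1, fun m => (z'.2 m).comp (σ m z'.1)) : Pa × (∀ n, C(C n, A n)))) ⁻¹' T ⊆ s := by
        intro z hz
        obtain ⟨N, L, hN, hLc, ha, hb⟩ := parametrized_precomp_key
          (fun y : Pa × C n => σ n y.1 y.2) (hσ n) (fun p => hsurj n p)
          hK hU z.1 (z.2 n) hz
        refine ⟨{w : Pa × (∀ n, C(C n, A n)) | w.1 ∈ interior N ∧ Set.MapsTo (w.2 n) L U},
          ?_, ?_, ?_⟩
        · have hopen1 : IsOpen {w : Pa × (∀ n, C(C n, A n)) | w.1 ∈ interior N} :=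
            isOpen_interior.preimage continuous_fst
          have hopen2 : IsOpen {w : Pa × (∀ n, C(C n, A n)) | Set.MapsTo (w.2 n) L U} := by
            change IsOpen ((fun w : Pa × (∀ n, C(C n, A n)) => w.2 n) ⁻¹'
              {g : C(C n, A n) | Set.MapsTo g L U})
            exact (ContinuousMap.isOpen_setOf_mapsTo hLc hU).preimage
              ((continuous_apply n).comp continuous_snd)
          exact hopen1.inter hopen2
        · exact ⟨mem_interior_iff_mem_nhds.2 hN, fun x hx => ha x hx⟩
        · rintro z' ⟨hz'N, hz'L⟩ d hd
          obtain ⟨x, hxL, hxd⟩ := hb z'.1 (interior_subset hz'N) d hd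
          have hmem : z'.2 n (σ n z'.1 x) ∈ U := hz'L hxL
          rwa [hxd] at hmem
      choose T hTopen hTmem hTsub using perpoint
      have hopen : IsOpen[t] s := by
        rw [ht]
        refine isOpen_induced_iff.2
          ⟨⋃ (z) (hz : z ∈ s), T z hz,
            isOpen_iUnion fun z => isOpen_iUnion fun hz => hTopen z hz, ?_⟩
        ext z'
        simp only [Set.mem_preimage, Set.mem_iUnion]
        constructor
        · rintro ⟨z, hz, hmem⟩
          exact hTsub z hz hmem
        · intro hz'
          exact ⟨z', hz', hTmem z' hz'⟩
      exact hopen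
    exact continuous_id_iff_le.1 (h1.prodMk (continuous_pi h3))
  · -- injectivity
    rintro ⟨p, f⟩ ⟨p', f'⟩ h
    simp only [Prod.mk.injEq] at h
    obtain ⟨rfl, h2⟩ := h
    refine Prod.ext rfl ?_
    funext n
    ext d
    obtain ⟨x, hx⟩ := hsurj n p d
    have hcongr := ContinuousMap.congr_fun (congrFun h2 n) x
    simp only [ContinuousMap.comp_apply] at hcongr
    rwa [hx] at hcongr

/-- Parametrized embedding lemma, product form: for families of compact
Hausdorff spaces `Cₙ`, `Dₙ`, arbitrary spaces `Aₙ`, and continuous maps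
`πⁿ : ([0,∞) × (0,∞)) × Cₙ → Dₙ` whose slices `πⁿ_{p,q}` are all surjective, the map
`Φ(p, q, (fₙ)ₙ) = (p, q, (fₙ ∘ πⁿ_{p,q})ₙ)` is a topological embedding
`[0,∞) × (0,∞) × ∏ₙ C(Dₙ, Aₙ) → [0,∞) × (0,∞) × ∏ₙ C(Cₙ, Aₙ)`. -/
theorem parametrized_precomp_pi_isEmbedding {C D A : ℕ → Type*}
    [∀ n, TopologicalSpace (C n)] [∀ n, TopologicalSpace (D n)] [∀ n, TopologicalSpace (A n)]
    [∀ n, CompactSpace (C n)] [∀ n, T2Space (C n)] [∀ n, CompactSpace (D n)] [∀ n, T2Space (D n)]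
    (π : ∀ n, ({p : ℝ // 0 ≤ p} × {q : ℝ // 0 < q}) × C n → D n)
    (hπ : ∀ n, Continuous (π n))
    (hsurj : ∀ n, ∀ pq : {p : ℝ // 0 ≤ p} × {q : ℝ // 0 < q},
      Function.Surjective (fun x : C n => π n (pq, x))) :
    IsEmbedding (fun z : {p : ℝ // 0 ≤ p} × {q : ℝ // 0 < q} × (∀ n, C(D n, A n)) =>
      ((z.1, z.2.1, fun n =>
        (z.2.2 n).comp ⟨fun x : C n => π n ((z.1, z.2.1), x),
          (hπ n).comp (continuous_const.prodMk continuous_id)⟩) :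
        {p : ℝ // 0 ≤ p} × {q : ℝ // 0 < q} × (∀ n, C(C n, A n)))) := by
  classical
  haveI hLP : LocallyCompactSpace {p : ℝ // 0 ≤ p} :=
    (isClosed_Ici (a := (0 : ℝ))).locallyCompactSpace
  haveI hLQ : LocallyCompactSpace {q : ℝ // 0 < q} :=
    (isOpen_Ioi (a := (0 : ℝ))).locallyCompactSpace
  let σ : ∀ n, ({p : ℝ // 0 ≤ p} × {q : ℝ // 0 < q}) → C(C n, D n) := fun n pq =>
    ⟨fun x : C n => π n (pq, x), (hπ n).comp (continuous_const.prodMk continuous_id)⟩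
  have hσ : ∀ n, Continuous fun y : ({p : ℝ // 0 ≤ p} × {q : ℝ // 0 < q}) × C n =>
      σ n y.1 y.2 := fun n => hπ n
  have hsurj' : ∀ n (p : {p : ℝ // 0 ≤ p} × {q : ℝ // 0 < q}),
      Function.Surjective (σ n p) := fun n p => hsurj n p
  have haux := parametrized_precomp_pi_isEmbedding_aux (A := A) σ hσ hsurj'
  exact (Homeomorph.prodAssoc _ _ _).isEmbedding.comp
    (haux.comp (Homeomorph.prodAssoc _ _ _).symm.isEmbedding)
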